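/- Let C be a symmetric unitary matrix with C = S Sᵀ for a unitary S, and let Γ: G → U(d) be a representation satisfying conj(Γ(g)) = conj(C) Γ(g) C for all g. Then S^H Γ(g) S is real for all g ∈ G. -/
import Mathlib


open Matrix BigOperators

/-- If `C` is symmetric unitary with `C = S Sᵀ` for a unitary `S`, and the unitary
representation `Γ` satisfies `conj(Γ(g)) = conj(C) Γ(g) C` for all `g`, then
`Sᴴ Γ(g) S` has real entries for all `g`. -/
theorem stmt12 {G : Type*} [Group G] {d : ℕ}
    (Γ : G →* Matrix.unitaryGroup (Fin d) ℂ)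
    (C S : Matrix (Fin d) (Fin d) ℂ)
    (hCsym : Cᵀ = C) (hCunit : Cᴴ * C = 1)
    (hSunit : Sᴴ * S = 1) (hCS : C = S * Sᵀ)
    (hrel : ∀ g : G, ((Γ g : Matrix (Fin d) (Fin d) ℂ)).map (starRingEnd ℂ) =
      C.map (starRingEnd ℂ) * (Γ g : Matrix (Fin d) (Fin d) ℂ) * C) :
    ∀ g : G, ∀ i j : Fin d,
      ((Sᴴ * (Γ g : Matrix (Fin d) (Fin d) ℂ) * S) i j).im = 0 := by
  intro g i j
  have hconjS : Sᴴ = (S.map (starRingEnd ℂ))ᵀ := by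
    ext a b; simp [Matrix.conjTranspose_apply]
  have h1 : Sᵀ * S.map (starRingEnd ℂ) = 1 := by
    have := congrArg Matrix.transpose hSunit
    rwa [Matrix.transpose_mul, hconjS, Matrix.transpose_transpose,
      Matrix.transpose_one] at this
  have hCconj : C.map (starRingEnd ℂ) = Cᴴ := by
    conv_rhs => rw [← hCsym]
    ext a b; simp [Matrix.conjTranspose_apply]
  have hST : Sᵀᴴ = S.map (starRingEnd ℂ) := by
    ext a b; simp [Matrix.conjTranspose_apply]
  have h2 : Sᵀ * C.map (starRingEnd ℂ) = Sᴴ := by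
    rw [hCconj, hCS, Matrix.conjTranspose_mul, ← Matrix.mul_assoc, hST, h1,
      Matrix.one_mul]
  have h3 : C * S.map (starRingEnd ℂ) = S := by
    rw [hCS, Matrix.mul_assoc, h1, Matrix.mul_one]
  have hSHconj : Sᴴ.map (starRingEnd ℂ) = Sᵀ := by
    ext a b; simp [Matrix.conjTranspose_apply]
  have hMconj : (Sᴴ * (Γ g : Matrix (Fin d) (Fin d) ℂ) * S).map (starRingEnd ℂ)
      = Sᴴ * (Γ g : Matrix (Fin d) (Fin d) ℂ) * S := by
    rw [Matrix.map_mul, Matrix.map_mul, hrel g, hSHconj]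
    calc Sᵀ * (C.map (starRingEnd ℂ) * (Γ g : Matrix (Fin d) (Fin d) ℂ) * C) *
          S.map (starRingEnd ℂ)
        = (Sᵀ * C.map (starRingEnd ℂ)) * (Γ g : Matrix (Fin d) (Fin d) ℂ) *
          (C * S.map (starRingEnd ℂ)) := by
          simp only [Matrix.mul_assoc]
      _ = Sᴴ * (Γ g : Matrix (Fin d) (Fin d) ℂ) * S := by rw [h2, h3]
  have h := congrFun (congrFun hMconj i) j
  simp only [Matrix.map_apply] at h
  exact Complex.conj_eq_iff_im.mp h
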